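/- Let X be a nonnegative real random variable with 0 < E[X] < ∞ and E[X²] < ∞. Then E[√X] ≥ √(E[X]) · (1 - Var(X)/(2·E[X]²)). -/

import Mathlib

open MeasureTheory ProbabilityTheory

lemma sqrt_ge_aux (x : ℝ) (hx : 0 ≤ x) : (3/2)*x - (1/2)*x^2 ≤ Real.sqrt x := by
  have h := Real.sq_sqrt hx
  have h0 := Real.sqrt_nonneg x
  nlinarith [mul_nonneg h0 (sq_nonneg (Real.sqrt x - 1)), sq_nonneg (Real.sqrt x - 1),
    sq_nonneg (Real.sqrt x + 1)]

/-- Let `X` be a nonnegative real random variable with `0 < E[X] < ∞` and `E[X²] < ∞`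
(i.e. `X ∈ L²`).  Then `E[√X] ≥ √(E[X]) (1 - Var(X)/(2 E[X]²))`. -/
theorem integral_sqrt_ge_of_memLp {Ω : Type*} [MeasureSpace Ω]
    (hprob : IsProbabilityMeasure (ℙ : Measure Ω))
    (X : Ω → ℝ) (hX : ∀ ω, 0 ≤ X ω) (hL2 : MemLp X 2)
    (hmean : 0 < ∫ ω, X ω) :
    Real.sqrt (∫ ω, X ω) * (1 - variance X ℙ / (2 * (∫ ω, X ω) ^ 2))
      ≤ ∫ ω, Real.sqrt (X ω) := by
  set m := ∫ ω, X ω with hm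
  have hm0 : m ≠ 0 := ne_of_gt hmean
  have hXint : Integrable X := hL2.integrable one_le_two
  have hX2int : Integrable (fun ω => X ω ^ 2) := hL2.integrable_sq
  -- integrability of sqrt ∘ X
  have hmeas : AEStronglyMeasurable (fun ω => Real.sqrt (X ω)) ℙ :=
    Real.continuous_sqrt.comp_aestronglyMeasurable hL2.aestronglyMeasurable
  have hsqrtInt : Integrable (fun ω => Real.sqrt (X ω)) := by
    refine (hXint.add (integrable_const 1)).mono hmeas ?_
    filter_upwards with ω
    have h1 : Real.sqrt (X ω) ≤ X ω + 1 := by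
      have h := Real.sq_sqrt (hX ω)
      nlinarith [sq_nonneg (Real.sqrt (X ω) - 1), Real.sqrt_nonneg (X ω)]
    have h2 : 0 ≤ X ω + 1 := by linarith [hX ω]
    simp only [Real.norm_eq_abs, Pi.add_apply, abs_of_nonneg (Real.sqrt_nonneg _),
      abs_of_nonneg h2]
    exact h1
  set a : ℝ := Real.sqrt m * 3 / (2 * m) with ha
  set b : ℝ := -(Real.sqrt m / (2 * m ^ 2)) with hb
  have key : ∀ ω, a * X ω + b * X ω ^ 2 ≤ Real.sqrt (X ω) := by
    intro ω
    have hdiv : 0 ≤ X ω / m := div_nonneg (hX ω) hmean.le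
    have h1 : Real.sqrt (X ω) = Real.sqrt m * Real.sqrt (X ω / m) := by
      rw [← Real.sqrt_mul hmean.le, mul_div_cancel₀ _ hm0]
    have h2 := mul_le_mul_of_nonneg_left (sqrt_ge_aux _ hdiv) (Real.sqrt_nonneg m)
    rw [← h1] at h2
    refine le_trans (le_of_eq ?_) h2
    rw [ha, hb]
    field_simp
    ring
  have hint : Integrable (fun ω => a * X ω + b * X ω ^ 2) :=
    (hXint.const_mul a).add (hX2int.const_mul b)
  have hmono : ∫ ω, (a * X ω + b * X ω ^ 2) ≤ ∫ ω, Real.sqrt (X ω) :=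
    integral_mono hint hsqrtInt key
  have hcalc : ∫ ω, (a * X ω + b * X ω ^ 2) = a * m + b * ∫ ω, X ω ^ 2 := by
    rw [integral_add (hXint.const_mul a) (hX2int.const_mul b),
      integral_const_mul, integral_const_mul]
  rw [hcalc] at hmono
  refine le_trans ?_ hmono
  rw [variance_eq_sub hL2]
  simp only [← hm, ha, hb, Pi.pow_apply]
  apply le_of_eq
  field_simp
  ring
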